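/- Let 𝔫 be a finite-dimensional nilpotent Lie algebra over ℂ and U₊ the augmentation ideal of its universal enveloping algebra U(𝔫). Then for every m ≥ 1, the m-th power (U₊)^m has finite codimension in U₊ (equivalently, U(𝔫)/(U₊)^m is finite dimensional over ℂ). -/

import Mathlib

set_option maxHeartbeats 1000000
set_option synthInstance.maxHeartbeats 400000

attribute [local instance 100] LieRing.ofAssociativeRing

/-- Let `𝔫` be a finite-dimensional nilpotent Lie algebra over `ℂ` and `U₊`
the augmentation ideal of `U(𝔫)` (the kernel of the counit `U(𝔫) → ℂ` sending `𝔫` to `0`).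
Then for every `m ≥ 1`, `(U₊)^m` has finite codimension in `U₊`; equivalently,
`U(𝔫)/(U₊)^m` is finite dimensional over `ℂ`. -/
theorem augmentation_ideal_power_finite_codim
    (L : Type*) [LieRing L] [LieAlgebra ℂ L]
    [FiniteDimensional ℂ L] [LieRing.IsNilpotent L]
    (counit : UniversalEnvelopingAlgebra ℂ L →ₐ[ℂ] ℂ)
    (hcounit : counit = UniversalEnvelopingAlgebra.lift ℂ (0 : L →ₗ⁅ℂ⁆ ℂ))
    (Up : Submodule ℂ (UniversalEnvelopingAlgebra ℂ L))
    (hUp : Up = LinearMap.ker counit.toLinearMap)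
    (m : ℕ) (hm : 1 ≤ m) :
    FiniteDimensional ℂ (UniversalEnvelopingAlgebra ℂ L ⧸ (Up ^ m)) := by
  classical
  set ι₀ : L →ₗ⁅ℂ⁆ UniversalEnvelopingAlgebra ℂ L := UniversalEnvelopingAlgebra.ι ℂ with hι₀
  set V : Submodule ℂ (UniversalEnvelopingAlgebra ℂ L) := Submodule.span ℂ (Set.range ι₀)
    with hVdef
  -- `V ≤ Up`
  have hV : V ≤ Up := by
    rw [hVdef, Submodule.span_le]
    rintro _ ⟨x, rfl⟩
    rw [hUp, SetLike.mem_coe, LinearMap.mem_ker, AlgHom.toLinearMap_apply, hcounit, hι₀,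
      UniversalEnvelopingAlgebra.lift_ι_apply]
    rfl
  -- `Up` is multiplicatively closed
  have hUpmul : Up * Up ≤ Up := by
    rw [Submodule.mul_le]
    intro a ha b hb
    rw [hUp, LinearMap.mem_ker, AlgHom.toLinearMap_apply] at ha hb ⊢
    rw [map_mul, ha, hb, mul_zero]
  -- powers of `Up` are decreasing from exponent 1 on
  have key : ∀ k : ℕ, Up ^ (k + 1) * Up ≤ Up ^ (k + 1) := by
    intro k
    rw [pow_succ, mul_assoc]
    exact (mul_le_mul' le_rfl hUpmul).trans (le_of_eq (pow_succ _ _).symm)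
  obtain ⟨m', rfl⟩ : ∃ m', m = m' + 1 := ⟨m - 1, by omega⟩
  have hpowle : ∀ j : ℕ, Up ^ (m' + 1 + j) ≤ Up ^ (m' + 1) := by
    intro j
    induction j with
    | zero => exact le_rfl
    | succ n ih =>
        rw [← add_assoc, pow_succ]
        exact (mul_le_mul' ih le_rfl).trans (key m')
  have hpow' : ∀ k : ℕ, m' + 1 ≤ k → Up ^ k ≤ Up ^ (m' + 1) := by
    intro k hk
    obtain ⟨j, rfl⟩ := Nat.exists_eq_add_of_le hk
    exact hpowle j
  have hVpow : ∀ k : ℕ, V ^ k ≤ Up ^ k := by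
    intro k
    induction k with
    | zero => exact le_rfl
    | succ n ih => rw [pow_succ, pow_succ]; exact mul_le_mul' ih hV
  -- the span of low-degree monomials
  set S : Submodule ℂ (UniversalEnvelopingAlgebra ℂ L) :=
    ⨆ k : Fin (m' + 1), V ^ (k : ℕ) with hSdef
  have hVk : ∀ k : ℕ, V ^ k ≤ Up ^ (m' + 1) ⊔ S := by
    intro k
    by_cases hk : k < m' + 1
    · exact le_sup_of_le_right (by rw [hSdef]; exact le_iSup (fun i : Fin (m' + 1) => V ^ (i : ℕ)) ⟨k, hk⟩)
    · exact le_sup_of_le_left ((hVpow k).trans (hpow' k (le_of_not_gt hk)))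
  have hUpT : Up ^ (m' + 1) ≤ Up ^ (m' + 1) ⊔ S := le_sup_left
  -- closure under multiplication
  have hTmulle : (Up ^ (m' + 1) ⊔ S) * (Up ^ (m' + 1) ⊔ S) ≤ Up ^ (m' + 1) ⊔ S := by
    rw [Submodule.sup_mul, Submodule.mul_sup, Submodule.mul_sup]
    have h11 : Up ^ (m' + 1) * Up ^ (m' + 1) ≤ Up ^ (m' + 1) ⊔ S := by
      rw [← pow_add]
      exact ((hpow' _ (by omega)).trans hUpT)
    have h1S : Up ^ (m' + 1) * S ≤ Up ^ (m' + 1) ⊔ S := by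
      rw [hSdef, Submodule.mul_iSup]
      refine iSup_le fun i => ?_
      have : Up ^ (m' + 1) * V ^ (i : ℕ) ≤ Up ^ (m' + 1) * Up ^ (i : ℕ) :=
        mul_le_mul' le_rfl (hVpow _)
      refine this.trans ?_
      rw [← pow_add]
      exact (hpow' _ (by omega)).trans hUpT
    have hS1 : S * Up ^ (m' + 1) ≤ Up ^ (m' + 1) ⊔ S := by
      rw [hSdef, Submodule.iSup_mul]
      refine iSup_le fun i => ?_
      have : V ^ (i : ℕ) * Up ^ (m' + 1) ≤ Up ^ (i : ℕ) * Up ^ (m' + 1) :=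
        mul_le_mul' (hVpow _) le_rfl
      refine this.trans ?_
      rw [← pow_add]
      exact (hpow' _ (by omega)).trans hUpT
    have hSS : S * S ≤ Up ^ (m' + 1) ⊔ S := by
      rw [hSdef, Submodule.iSup_mul]
      refine iSup_le fun i => ?_
      rw [Submodule.mul_iSup]
      refine iSup_le fun j => ?_
      rw [← pow_add]
      exact hVk _
    exact sup_le (sup_le h11 h1S) (sup_le hS1 hSS)
  have hTmul : ∀ a b : UniversalEnvelopingAlgebra ℂ L,
      a ∈ Up ^ (m' + 1) ⊔ S → b ∈ Up ^ (m' + 1) ⊔ S → a * b ∈ Up ^ (m' + 1) ⊔ S :=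
    fun a b ha hb => hTmulle (Submodule.mul_mem_mul ha hb)
  -- `U(L)` is generated as an algebra by the image of `ι`
  have hgen : ∀ u : UniversalEnvelopingAlgebra ℂ L,
      u ∈ Algebra.adjoin ℂ (Set.range ι₀) := by
    set A : Subalgebra ℂ (UniversalEnvelopingAlgebra ℂ L) := Algebra.adjoin ℂ (Set.range ι₀)
      with hAdef
    let f : L →ₗ⁅ℂ⁆ A :=
      { toFun := fun x => ⟨ι₀ x, Algebra.subset_adjoin ⟨x, rfl⟩⟩
        map_add' := fun x y => Subtype.ext (ι₀.map_add x y)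
        map_smul' := fun c x => Subtype.ext (ι₀.map_smul c x)
        map_lie' := fun {x y} => Subtype.ext (by
          simpa [Ring.lie_def] using ι₀.map_lie x y) }
    let g : UniversalEnvelopingAlgebra ℂ L →ₐ[ℂ] UniversalEnvelopingAlgebra ℂ L :=
      A.val.comp (UniversalEnvelopingAlgebra.lift ℂ f)
    have hg : g = AlgHom.id ℂ (UniversalEnvelopingAlgebra ℂ L) := by
      refine UniversalEnvelopingAlgebra.hom_ext ℂ (LieHom.ext fun x => ?_)
      show g (ι₀ x) = ι₀ x
      show A.val ((UniversalEnvelopingAlgebra.lift ℂ f) (UniversalEnvelopingAlgebra.ι ℂ x)) = ι₀ x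
      rw [UniversalEnvelopingAlgebra.lift_ι_apply]
      rfl
    intro u
    have h1 : g u = u := by rw [hg]; rfl
    have h2 : g u ∈ A := ((UniversalEnvelopingAlgebra.lift ℂ f) u).2
    rwa [h1] at h2
  -- hence every element lies in `Up ^ m ⊔ S`
  have htop : ∀ u : UniversalEnvelopingAlgebra ℂ L, u ∈ Up ^ (m' + 1) ⊔ S := by
    intro u
    refine Algebra.adjoin_induction (fun x hx => ?_) (fun r => ?_)
      (fun x y _ _ hx hy => (Up ^ (m' + 1) ⊔ S).add_mem hx hy)
      (fun x y _ _ hx hy => hTmul x y hx hy) (hgen u)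
    · refine hVk 1 ?_
      rw [pow_one]
      exact Submodule.subset_span hx
    · rw [Algebra.algebraMap_eq_smul_one]
      refine Submodule.smul_mem _ r (hVk 0 ?_)
      rw [pow_zero]
      exact Submodule.one_le.mp le_rfl
  -- `S` is finite dimensional
  have hVfg : V.FG := by
    have hcoe : Set.range ⇑ι₀ = Set.range ⇑ι₀.toLinearMap := by
      rw [LieHom.coe_toLinearMap]
    have hVeq : V = LinearMap.range ι₀.toLinearMap := by
      rw [hVdef, hcoe, ← LinearMap.coe_range, Submodule.span_eq]
    rw [hVeq, ← Submodule.map_top]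
    exact Submodule.FG.map _ (Module.finite_def.mp ‹FiniteDimensional ℂ L›)
  have hSfg : S.FG := by
    rw [hSdef]
    exact Submodule.fg_iSup _ fun i => hVfg.pow _
  have hSfin : Module.Finite ℂ S := Module.Finite.iff_fg.mpr hSfg
  -- conclude via the surjection `S → U / Up ^ m`
  let π : S →ₗ[ℂ] UniversalEnvelopingAlgebra ℂ L ⧸ (Up ^ (m' + 1)) :=
    (Up ^ (m' + 1)).mkQ ∘ₗ S.subtype
  have hsurj : Function.Surjective π := by
    intro z
    obtain ⟨x, rfl⟩ := (Up ^ (m' + 1)).mkQ_surjective z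
    obtain ⟨a, ha, b, hb, hab⟩ := Submodule.mem_sup.mp (htop x)
    refine ⟨⟨b, hb⟩, ?_⟩
    show (Up ^ (m' + 1)).mkQ b = (Up ^ (m' + 1)).mkQ x
    rw [← hab]
    have : (Up ^ (m' + 1)).mkQ a = 0 := (Submodule.Quotient.mk_eq_zero _).mpr ha
    rw [map_add, this, zero_add]
  exact Module.Finite.of_surjective π hsurj
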